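/- arXiv:0705.1316 — 8 statements merged into one kernel-verified Lean document; each statement's English description precedes it below -/
import Mathlib

section
/- Let A be a Novikov algebra over a field k of characteristic zero and let I and J be two-sided ideals of A. Then the subspace I·J spanned by all products x·y with x ∈ I, y ∈ J is also a two-sided ideal of A. -/
/-- In a Novikov algebra `A` over a field `k` of characteristic zero,
the product `I·J` of two two-sided ideals `I`, `J` (the subspace spanned by all
products `x·y` with `x ∈ I`, `y ∈ J`) is again a two-sided ideal of `A`. -/
theorem novikov_ideal_mul_ideal
    {k A : Type*} [Field k] [CharZero k] [AddCommGroup A] [Module k A]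
    (mul : A →ₗ[k] A →ₗ[k] A)
    (hls : ∀ x y z : A,
      mul x (mul y z) - mul (mul x y) z = mul y (mul x z) - mul (mul y x) z)
    (hnov : ∀ x y z : A, mul (mul x y) z = mul (mul x z) y)
    (I J : Submodule k A)
    (hI : ∀ a : A, ∀ x ∈ I, mul a x ∈ I ∧ mul x a ∈ I)
    (hJ : ∀ a : A, ∀ y ∈ J, mul a y ∈ J ∧ mul y a ∈ J) :
    ∀ a : A, ∀ w ∈ Submodule.span k {z : A | ∃ x ∈ I, ∃ y ∈ J, z = mul x y},
      mul a w ∈ Submodule.span k {z : A | ∃ x ∈ I, ∃ y ∈ J, z = mul x y} ∧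
      mul w a ∈ Submodule.span k {z : A | ∃ x ∈ I, ∃ y ∈ J, z = mul x y} := by
  intro a w hw
  set S : Submodule k A := Submodule.span k {z : A | ∃ x ∈ I, ∃ y ∈ J, z = mul x y} with hS
  have hgen : ∀ x ∈ I, ∀ y ∈ J, mul x y ∈ S := fun x hx y hy =>
    Submodule.subset_span ⟨x, hx, y, hy, rfl⟩
  constructor
  · -- left multiplication
    induction hw using Submodule.span_induction with
    | mem z hz =>
      obtain ⟨x, hx, y, hy, rfl⟩ := hz
      have h1 : mul a (mul x y) =
          mul (mul a x) y + (mul x (mul a y) - mul (mul x a) y) := by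
        have := hls a x y
        abel_nf
        linear_combination (norm := abel_nf) this
      rw [h1]
      exact S.add_mem (hgen _ (hI a x hx).1 _ hy)
        (S.sub_mem (hgen _ hx _ (hJ a y hy).1) (hgen _ (hI a x hx).2 _ hy))
    | zero => simp
    | add u v _ _ hu hv => rw [map_add]; exact S.add_mem hu hv
    | smul c u _ hu => rw [map_smul]; exact S.smul_mem c hu
  · -- right multiplication
    induction hw using Submodule.span_induction with
    | mem z hz =>
      obtain ⟨x, hx, y, hy, rfl⟩ := hz
      rw [hnov]
      exact hgen _ (hI a x hx).2 _ hy
    | zero => simp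
    | add u v _ _ hu hv =>
      have : mul (u + v) a = mul u a + mul v a := by simp
      rw [this]; exact S.add_mem hu hv
    | smul c u _ hu =>
      have : mul (c • u) a = c • mul u a := by simp
      rw [this]; exact S.smul_mem c hu
end

section
/- Let A be a Novikov algebra over a field k of characteristic zero and let I and J be two-sided ideals of A. Then the subspace [I,J] spanned by all commutators [x,y] = x·y − y·x with x ∈ I, y ∈ J is also a two-sided ideal of A. -/
/-- In a Novikov algebra `A` over a field `k` of characteristic zero,
the commutator `[I,J]` of two two-sided ideals `I`, `J` (the subspace spanned by all
commutators `[x,y] = x·y − y·x` with `x ∈ I`, `y ∈ J`) is again a two-sided ideal. -/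
theorem novikov_ideal_bracket_ideal
    {k A : Type*} [Field k] [CharZero k] [AddCommGroup A] [Module k A]
    (mul : A →ₗ[k] A →ₗ[k] A)
    (hls : ∀ x y z : A,
      mul x (mul y z) - mul (mul x y) z = mul y (mul x z) - mul (mul y x) z)
    (hnov : ∀ x y z : A, mul (mul x y) z = mul (mul x z) y)
    (I J : Submodule k A)
    (hI : ∀ a : A, ∀ x ∈ I, mul a x ∈ I ∧ mul x a ∈ I)
    (hJ : ∀ a : A, ∀ y ∈ J, mul a y ∈ J ∧ mul y a ∈ J) :
    ∀ a : A,
      ∀ w ∈ Submodule.span k {z : A | ∃ x ∈ I, ∃ y ∈ J, z = mul x y - mul y x},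
      mul a w ∈ Submodule.span k {z : A | ∃ x ∈ I, ∃ y ∈ J, z = mul x y - mul y x} ∧
      mul w a ∈ Submodule.span k {z : A | ∃ x ∈ I, ∃ y ∈ J, z = mul x y - mul y x} := by
  intro a
  set S := Submodule.span k {z : A | ∃ x ∈ I, ∃ y ∈ J, z = mul x y - mul y x} with hSdef
  have hgen : ∀ x ∈ I, ∀ y ∈ J, mul x y - mul y x ∈ S := fun x hx y hy =>
    Submodule.subset_span ⟨x, hx, y, hy, rfl⟩
  have keyR : ∀ b : A, ∀ x ∈ I, ∀ y ∈ J, mul (mul x y - mul y x) b ∈ S := by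
    intro b x hx y hy
    have e1 := hnov x y b
    have e2 := hnov y x b
    have e3 := hls x y b
    have h2 : (2 : k) • (mul (mul x y - mul y x) b)
        = (mul (mul x b) y - mul y (mul x b)) + (mul x (mul y b) - mul (mul y b) x) := by
      simp only [map_sub, LinearMap.sub_apply]
      linear_combination (norm := module) e1 - e2 - e3
    have hm : (2 : k) • (mul (mul x y - mul y x) b) ∈ S := by
      rw [h2]
      exact S.add_mem (hgen _ ((hI b x hx).2) _ hy) (hgen _ hx _ ((hJ b y hy).2))
    have h3 := S.smul_mem ((2 : k)⁻¹) hm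
    rwa [smul_smul, inv_mul_cancel₀ (by norm_num : (2:k) ≠ 0), one_smul] at h3
  have keyL : ∀ x ∈ I, ∀ y ∈ J, mul a (mul x y - mul y x) ∈ S := by
    intro x hx y hy
    have f1 := hls a x y
    have f2 := hls a y x
    have g1 := hnov x y a
    have g2 := hnov y x a
    have hL : mul a (mul x y - mul y x)
        = (mul (mul a x) y - mul y (mul a x)) + (mul x (mul a y) - mul (mul a y) x)
          - mul (mul x y - mul y x) a := by
      simp only [map_sub, LinearMap.sub_apply]
      linear_combination (norm := module) f1 - f2 + g1 - g2
    rw [hL]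
    exact S.sub_mem (S.add_mem (hgen _ ((hI a x hx).1) _ hy) (hgen _ hx _ ((hJ a y hy).1)))
      (keyR a x hx y hy)
  intro w hw
  constructor
  · have hle : S ≤ S.comap (mul a) := by
      rw [hSdef, Submodule.span_le]
      rintro z ⟨x, hx, y, hy, rfl⟩
      exact keyL x hx y hy
    exact hle hw
  · have hle : S ≤ S.comap (mul.flip a) := by
      rw [hSdef, Submodule.span_le]
      rintro z ⟨x, hx, y, hy, rfl⟩
      exact keyR a x hx y hy
    exact hle hw
end

section
/- Let A be a Novikov algebra over a field k of characteristic zero. Then every term γ_i(A) of the lower central series of A is a two-sided ideal of A. -/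
variable {k A : Type*} [Field k] [CharZero k] [AddCommGroup A] [Module k A]

/-- The lower central series of an algebra `(A, mul)`:
`lcs mul 0 = γ₁(A) = A` and `lcs mul (i+1) = γ_{i+2}(A) = [A, γ_{i+1}(A)]`,
the subspace spanned by all commutators `x·y − y·x` with `x ∈ A`, `y ∈ γ_{i+1}(A)`. -/
def lcs (mul : A →ₗ[k] A →ₗ[k] A) : ℕ → Submodule k A
  | 0 => ⊤
  | i + 1 =>
    Submodule.span k {z : A | ∃ x : A, ∃ y ∈ lcs mul i, z = mul x y - mul y x}

/-- In a Novikov algebra `A` over a field `k` of characteristic zero,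
every term `γ_i(A)` of the lower central series is a two-sided ideal of `A`. -/
theorem novikov_lowerCentralSeries_ideal
    (mul : A →ₗ[k] A →ₗ[k] A)
    (hls : ∀ x y z : A,
      mul x (mul y z) - mul (mul x y) z = mul y (mul x z) - mul (mul y x) z)
    (hnov : ∀ x y z : A, mul (mul x y) z = mul (mul x z) y) :
    ∀ i : ℕ, ∀ a : A, ∀ x ∈ lcs mul i, mul a x ∈ lcs mul i ∧ mul x a ∈ lcs mul i := by
  intro i
  induction i with
  | zero =>
    intro a x _
    exact ⟨Submodule.mem_top, Submodule.mem_top⟩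
  | succ i ih =>
    have gen : ∀ p q : A, q ∈ lcs mul i → mul p q - mul q p ∈ lcs mul (i + 1) := by
      intro p q hq
      exact Submodule.subset_span ⟨p, q, hq, rfl⟩
    intro a x hx
    refine Submodule.span_induction
      (p := fun z _ => mul a z ∈ lcs mul (i + 1) ∧ mul z a ∈ lcs mul (i + 1))
      ?_ ?_ ?_ ?_ hx
    · rintro z ⟨x, y, hy, rfl⟩
      have e1 := hls x y a
      have e2 := hnov x y a
      have e3 := hnov y x a
      have e1' : mul x (mul y a) - mul y (mul x a)
          = mul (mul x y) a - mul (mul y x) a := by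
        rw [sub_eq_sub_iff_add_eq_add] at e1 ⊢
        rw [e1, add_comm]
      have h2 : (2 : k) • mul (mul x y - mul y x) a =
          (mul x (mul y a) - mul (mul y a) x) -
            (mul y (mul x a) - mul (mul x a) y) := by
        calc (2 : k) • mul (mul x y - mul y x) a
            = mul (mul x y - mul y x) a + mul (mul x y - mul y x) a := two_smul k _
          _ = (mul (mul x y) a - mul (mul y x) a)
              + (mul x (mul y a) - mul y (mul x a)) := by
              rw [e1']; simp only [map_sub, LinearMap.sub_apply]
          _ = (mul (mul x a) y - mul (mul y a) x)
              + (mul x (mul y a) - mul y (mul x a)) := by rw [e2, e3]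
          _ = (mul x (mul y a) - mul (mul y a) x)
              - (mul y (mul x a) - mul (mul x a) y) := by abel
      have hya : mul y a ∈ lcs mul i := (ih a y hy).2
      have hmem2 : (2 : k) • mul (mul x y - mul y x) a ∈ lcs mul (i + 1) := by
        rw [h2]
        refine Submodule.sub_mem _ (gen x (mul y a) hya) ?_
        rw [← neg_sub]
        exact Submodule.neg_mem _ (gen (mul x a) y hy)
      have hright : mul (mul x y - mul y x) a ∈ lcs mul (i + 1) := by
        have heq : mul (mul x y - mul y x) a
            = (2 : k)⁻¹ • ((2 : k) • mul (mul x y - mul y x) a) := by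
          rw [smul_smul, inv_mul_cancel₀ (two_ne_zero), one_smul]
        rw [heq]
        exact Submodule.smul_mem _ _ hmem2
      have hcomm : mul a (mul x y - mul y x) - mul (mul x y - mul y x) a
          ∈ lcs mul (i + 1) := by
        have h := Submodule.sub_mem _
          (gen a (mul x y) (ih x y hy).1) (gen a (mul y x) (ih x y hy).2)
        have heq : mul a (mul x y - mul y x) - mul (mul x y - mul y x) a
            = (mul a (mul x y) - mul (mul x y) a)
              - (mul a (mul y x) - mul (mul y x) a) := by
          simp only [map_sub, LinearMap.sub_apply]; abel
        rw [heq]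
        exact h
      refine ⟨?_, hright⟩
      have heq : mul a (mul x y - mul y x)
          = (mul a (mul x y - mul y x) - mul (mul x y - mul y x) a)
            + mul (mul x y - mul y x) a := by abel
      rw [heq]
      exact Submodule.add_mem _ hcomm hright
    · simp only [map_zero, LinearMap.zero_apply]
      exact ⟨Submodule.zero_mem _, Submodule.zero_mem _⟩
    · intro u v _ _ hu hv
      rw [map_add, map_add, LinearMap.add_apply]
      exact ⟨Submodule.add_mem _ hu.1 hv.1, Submodule.add_mem _ hu.2 hv.2⟩
    · intro r u _ hu
      rw [map_smul, map_smul, LinearMap.smul_apply]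
      exact ⟨Submodule.smul_mem _ _ hu.1, Submodule.smul_mem _ _ hu.2⟩
end

section
/- Let A be a Novikov algebra over a field k of characteristic zero. Then γ_{i+1}(A)·γ_{j+1}(A) ⊆ γ_{i+j+1}(A) for all i, j ≥ 0, where γ_{i+1}(A)·γ_{j+1}(A) is the subspace spanned by all products x·y with x ∈ γ_{i+1}(A), y ∈ γ_{j+1}(A). -/
variable {k A : Type*} [Field k] [CharZero k] [AddCommGroup A] [Module k A]
set_option linter.unusedSectionVars false

section Aux

variable (mul : A →ₗ[k] A →ₗ[k] A)

lemma mem_lcs_succ {i : ℕ} (x : A) {y : A} (hy : y ∈ lcs mul i) :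
    mul x y - mul y x ∈ lcs mul (i + 1) :=
  Submodule.subset_span ⟨x, y, hy, rfl⟩

lemma lcs_antitone : ∀ i : ℕ, lcs mul (i + 1) ≤ lcs mul i
  | 0 => le_top
  | i + 1 => by
    refine Submodule.span_le.mpr ?_
    rintro z ⟨x, y, hy, rfl⟩
    exact mem_lcs_succ mul x (lcs_antitone i hy)

/-- member of `lcs` with `2 • z ∈ S` tool: divide by two. -/
lemma mem_of_two_smul_mem {S : Submodule k A} {z : A} (h : (2 : k) • z ∈ S) : z ∈ S := by
  have h2 : (2 : k) ≠ 0 := two_ne_zero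
  have := S.smul_mem (2 : k)⁻¹ h
  rwa [smul_smul, inv_mul_cancel₀ h2, one_smul] at this

/-- Key Novikov identity: `2[c,d]·y = [c, d·y] − [d, c·y]`. -/
lemma key_identity (hls : ∀ x y z : A,
      mul x (mul y z) - mul (mul x y) z = mul y (mul x z) - mul (mul y x) z) (hnov : ∀ x y z : A, mul (mul x y) z = mul (mul x z) y) (c d y : A) :
    (2 : k) • (mul (mul c d - mul d c) y) =
      (mul c (mul d y) - mul (mul d y) c) - (mul d (mul c y) - mul (mul c y) d) := by
  rw [hnov d y c, hnov c y d, map_sub, LinearMap.sub_apply, two_smul]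
  linear_combination (norm := abel) - hls c d y

/-- Jacobi identity for the commutator of a left-symmetric algebra. -/
lemma jacobi (hls : ∀ x y z : A,
      mul x (mul y z) - mul (mul x y) z = mul y (mul x z) - mul (mul y x) z) (a b y : A) :
    mul (mul a b - mul b a) y - mul y (mul a b - mul b a) =
      (mul a (mul b y - mul y b) - mul (mul b y - mul y b) a)
        - (mul b (mul a y - mul y a) - mul (mul a y - mul y a) b) := by
  simp only [map_sub, LinearMap.sub_apply]
  linear_combination (norm := abel) - hls a b y - hls b y a + hls a y b

/-- `[γ_{p+1}, γ_{q+1}] ⊆ γ_{p+q+2}`. -/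
lemma lcs_bracket (hls : ∀ x y z : A,
      mul x (mul y z) - mul (mul x y) z = mul y (mul x z) - mul (mul y x) z) : ∀ p q : ℕ, ∀ x ∈ lcs mul p, ∀ y ∈ lcs mul q,
    mul x y - mul y x ∈ lcs mul (p + q + 1)
  | 0, q => fun x _ y hy => by simpa using mem_lcs_succ mul x hy
  | p + 1, q => by
    intro x hx y hy
    induction hx using Submodule.span_induction with
    | mem z hz =>
      obtain ⟨a, b, hb, rfl⟩ := hz
      rw [jacobi mul hls a b y]
      have h1 : mul a (mul b y - mul y b) - mul (mul b y - mul y b) a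
          ∈ lcs mul (p + 1 + q + 1) := by
        have := mem_lcs_succ mul a (lcs_bracket hls p q b hb y hy)
        convert this using 2
        omega
      have h2 : mul b (mul a y - mul y a) - mul (mul a y - mul y a) b
          ∈ lcs mul (p + 1 + q + 1) := by
        have := lcs_bracket hls p (q + 1) b hb _ (mem_lcs_succ mul a hy)
        convert this using 2
        omega
      exact Submodule.sub_mem _ h1 h2
    | zero => simpa using Submodule.zero_mem _
    | add u v _ _ hu hv =>
      have : mul (u + v) y - mul y (u + v)
          = (mul u y - mul y u) + (mul v y - mul y v) := by
        simp only [map_add, LinearMap.add_apply]; abel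
      rw [this]; exact Submodule.add_mem _ hu hv
    | smul c u _ hu =>
      have : mul (c • u) y - mul y (c • u) = c • (mul u y - mul y u) := by
        simp only [map_smul, LinearMap.smul_apply, smul_sub]
      rw [this]; exact Submodule.smul_mem _ c hu

/-- `γ_{j+1}` is a right ideal. -/
lemma lcs_right_mul (hls : ∀ x y z : A,
      mul x (mul y z) - mul (mul x y) z = mul y (mul x z) - mul (mul y x) z) (hnov : ∀ x y z : A, mul (mul x y) z = mul (mul x z) y) :
    ∀ j : ℕ, ∀ y ∈ lcs mul j, ∀ x : A, mul y x ∈ lcs mul j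
  | 0 => fun y _ x => Submodule.mem_top
  | j + 1 => by
    intro y hy x
    induction hy using Submodule.span_induction with
    | mem z hz =>
      obtain ⟨a, b, hb, rfl⟩ := hz
      apply mem_of_two_smul_mem
      rw [key_identity mul hls hnov a b x]
      refine Submodule.sub_mem _ (mem_lcs_succ mul a (lcs_right_mul hls hnov j _ hb x)) ?_
      have := Submodule.neg_mem _ (mem_lcs_succ mul (mul a x) hb)
      simpa using this
    | zero => simp
    | add u v _ _ hu hv => rw [map_add, LinearMap.add_apply]; exact Submodule.add_mem _ hu hv
    | smul c u _ hu =>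
      rw [map_smul, LinearMap.smul_apply]; exact Submodule.smul_mem _ c hu

/-- `γ_{j+1}` is a left ideal. -/
lemma lcs_left_mul (hls : ∀ x y z : A,
      mul x (mul y z) - mul (mul x y) z = mul y (mul x z) - mul (mul y x) z) (hnov : ∀ x y z : A, mul (mul x y) z = mul (mul x z) y)
    (j : ℕ) {y : A} (hy : y ∈ lcs mul j) (x : A) : mul x y ∈ lcs mul j := by
  have h : mul x y = mul y x + (mul x y - mul y x) := by abel
  rw [h]
  exact Submodule.add_mem _ (lcs_right_mul mul hls hnov j y hy x)
    (lcs_antitone mul j (mem_lcs_succ mul x hy))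

lemma lcs_mul_mem (hls : ∀ x y z : A,
      mul x (mul y z) - mul (mul x y) z = mul y (mul x z) - mul (mul y x) z) (hnov : ∀ x y z : A, mul (mul x y) z = mul (mul x z) y) :
    ∀ i j : ℕ, ∀ x ∈ lcs mul i, ∀ y ∈ lcs mul j, mul x y ∈ lcs mul (i + j)
  | 0, j => fun x _ y hy => by simpa using lcs_left_mul mul hls hnov j hy x
  | i + 1, j => by
    intro x hx y hy
    induction hx using Submodule.span_induction with
    | mem z hz =>
      obtain ⟨a, b, hb, rfl⟩ := hz
      apply mem_of_two_smul_mem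
      rw [key_identity mul hls hnov a b y]
      have h1 : mul a (mul b y) - mul (mul b y) a ∈ lcs mul (i + 1 + j) := by
        have := mem_lcs_succ mul a (lcs_mul_mem hls hnov i j b hb y hy)
        convert this using 2
        omega
      have h2 : mul b (mul a y) - mul (mul a y) b ∈ lcs mul (i + 1 + j) := by
        have := lcs_bracket mul hls i j b hb (mul a y) (lcs_left_mul mul hls hnov j hy a)
        convert this using 2
        omega
      exact Submodule.sub_mem _ h1 h2
    | zero => simp
    | add u v _ _ hu hv => rw [map_add, LinearMap.add_apply]; exact Submodule.add_mem _ hu hv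
    | smul c u _ hu =>
      rw [map_smul, LinearMap.smul_apply]; exact Submodule.smul_mem _ c hu

end Aux

/-- In a Novikov algebra `A` over a field `k` of characteristic zero,
`γ_{i+1}(A)·γ_{j+1}(A) ⊆ γ_{i+j+1}(A)` for all `i, j ≥ 0`. -/
theorem novikov_lcs_mul_lcs
    (mul : A →ₗ[k] A →ₗ[k] A)
    (hls : ∀ x y z : A,
      mul x (mul y z) - mul (mul x y) z = mul y (mul x z) - mul (mul y x) z)
    (hnov : ∀ x y z : A, mul (mul x y) z = mul (mul x z) y) :
    ∀ i j : ℕ,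
      Submodule.span k {z : A | ∃ x ∈ lcs mul i, ∃ y ∈ lcs mul j, z = mul x y}
        ≤ lcs mul (i + j) := by
  intro i j
  refine Submodule.span_le.mpr ?_
  rintro z ⟨x, hx, y, hy, rfl⟩
  exact lcs_mul_mem mul hls hnov i j x hx y hy
end

section
/- Let A be a Novikov algebra over a field k of characteristic zero. Then Z(A)·[A,A] = 0 and [A,A]·Z(A) = 0; that is, z·[a,b] = 0 and [a,b]·z = 0 for all a, b ∈ A and z ∈ Z(A). -/
/-- In a Novikov algebra `A` over a field `k` of characteristic zero,
`Z(A)·[A,A] = 0` and `[A,A]·Z(A) = 0`: for all `a, b ∈ A` and all `z` in the center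
`Z(A) = {x | x·y = y·x for all y}` one has `z·[a,b] = 0` and `[a,b]·z = 0`. -/
theorem novikov_center_mul_commutator
    {k A : Type*} [Field k] [CharZero k] [AddCommGroup A] [Module k A]
    (mul : A →ₗ[k] A →ₗ[k] A)
    (hls : ∀ x y z : A,
      mul x (mul y z) - mul (mul x y) z = mul y (mul x z) - mul (mul y x) z)
    (hnov : ∀ x y z : A, mul (mul x y) z = mul (mul x z) y)
    (a b z : A) (hz : ∀ y : A, mul z y = mul y z) :
    mul z (mul a b - mul b a) = 0 ∧ mul (mul a b - mul b a) z = 0 := by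
  have h : mul (mul a b - mul b a) z = 0 := by
    rw [map_sub, LinearMap.sub_apply, hnov a b z, hnov b a z, ← hz a, ← hz b,
      hnov z a b, sub_self]
  exact ⟨(hz _).trans h, h⟩
end

section
/- Let A be a Novikov algebra over a field k of characteristic zero. Then the center Z(A) is a two-sided ideal of A; that is, for all z ∈ Z(A) and a ∈ A, both a·z and z·a lie in Z(A). -/
/-- In a Novikov algebra `A` over a field `k` of characteristic zero,
the center `Z(A) = {x | x·y = y·x for all y}` is a two-sided ideal of `A`:
for all `z ∈ Z(A)` and `a ∈ A`, both `a·z` and `z·a` lie in `Z(A)`. -/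
theorem novikov_center_ideal
    {k A : Type*} [Field k] [CharZero k] [AddCommGroup A] [Module k A]
    (mul : A →ₗ[k] A →ₗ[k] A)
    (hls : ∀ x y z : A,
      mul x (mul y z) - mul (mul x y) z = mul y (mul x z) - mul (mul y x) z)
    (hnov : ∀ x y z : A, mul (mul x y) z = mul (mul x z) y)
    (z : A) (hz : ∀ y : A, mul z y = mul y z) (a : A) :
    (∀ y : A, mul (mul a z) y = mul y (mul a z)) ∧
    (∀ y : A, mul (mul z a) y = mul y (mul z a)) := by
  -- Lemma A: z(xy) = x(zy) for all x, y.
  have hA : ∀ x y : A, mul z (mul x y) = mul x (mul z y) := by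
    intro x y
    have h := hls z x y
    rw [hz x] at h
    exact sub_left_inj.mp h
  -- Lemma B: z(xy) = z(yx) for all x, y.
  have hB : ∀ x y : A, mul z (mul x y) = mul z (mul y x) := by
    intro x y
    calc mul z (mul x y) = mul (mul x y) z := hz _
      _ = mul (mul x z) y := hnov x y z
      _ = mul (mul z x) y := by rw [hz x]
      _ = mul (mul z y) x := hnov z x y
      _ = mul (mul y z) x := by rw [hz y]
      _ = mul (mul y x) z := (hnov y x z).symm
      _ = mul z (mul y x) := (hz _).symm
  -- Main claim: a·z is central.
  have key : ∀ y : A, mul (mul a z) y = mul y (mul a z) := by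
    intro y
    calc mul (mul a z) y = mul (mul a y) z := hnov a z y
      _ = mul z (mul a y) := (hz _).symm
      _ = mul z (mul y a) := hB a y
      _ = mul y (mul z a) := hA y a
      _ = mul y (mul a z) := by rw [hz a]
  refine ⟨key, ?_⟩
  intro y
  rw [hz a]
  exact key y
end

section
/- Let k be a field of characteristic zero, n ≥ 1, and let f be the free 3-step nilpotent Lie algebra on n generators over k, i.e. the quotient of the free Lie algebra on n generators by the fourth term γ₄ of its lower central series. Then f admits a Novikov structure. -/
/-- A Novikov structure on a Lie algebra `g` over `k`: a bilinear product satisfying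
left-symmetry, the Novikov identity, and whose commutator is the Lie bracket. -/
def HasNovikovStructure (k g : Type*) [Field k] [LieRing g] [LieAlgebra k g] : Prop :=
  ∃ mul : g →ₗ[k] g →ₗ[k] g,
    (∀ x y z : g,
      mul x (mul y z) - mul (mul x y) z = mul y (mul x z) - mul (mul y x) z) ∧
    (∀ x y z : g, mul (mul x y) z = mul (mul x z) y) ∧
    (∀ x y : g, mul x y - mul y x = ⁅x, y⁆)

set_option linter.unusedSectionVars false
set_option maxHeartbeats 1000000

namespace NovTest
variable (k : Type*) [Field k] [CharZero k] (n : ℕ)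

local notation "L" => FreeLieAlgebra k (Fin n)

abbrev QN := FreeLieAlgebra k (Fin n) ⧸
  LieModule.lowerCentralSeries k (FreeLieAlgebra k (Fin n)) (FreeLieAlgebra k (Fin n)) 3

variable {n}

-- bracket lemmas restated with the quotient's bracket instance, so `rw`/`simp` work
lemma qlie_add (x y z : QN k n) : ⁅x, y + z⁆ = ⁅x, y⁆ + ⁅x, z⁆ := lie_add x y z
lemma qadd_lie (x y z : QN k n) : ⁅x + y, z⁆ = ⁅x, z⁆ + ⁅y, z⁆ := add_lie x y z
lemma qlie_zero (x : QN k n) : ⁅x, (0 : QN k n)⁆ = 0 := lie_zero x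
lemma qzero_lie (x : QN k n) : ⁅(0 : QN k n), x⁆ = 0 := zero_lie x
lemma qlie_smul (t : k) (x y : QN k n) : ⁅x, t • y⁆ = t • ⁅x, y⁆ := lie_smul t x y
lemma qsmul_lie (t : k) (x y : QN k n) : ⁅t • x, y⁆ = t • ⁅x, y⁆ := smul_lie t x y
lemma qlie_sub (x y z : QN k n) : ⁅x, y - z⁆ = ⁅x, y⁆ - ⁅x, z⁆ := lie_sub x y z
lemma qsub_lie (x y z : QN k n) : ⁅x - y, z⁆ = ⁅x, z⁆ - ⁅y, z⁆ := sub_lie x y z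
lemma qlie_neg (x y : QN k n) : ⁅x, -y⁆ = -⁅x, y⁆ := lie_neg x y
lemma qneg_lie (x y : QN k n) : ⁅-x, y⁆ = -⁅x, y⁆ := neg_lie x y
lemma qlie_skew (x y : QN k n) : ⁅x, y⁆ = -⁅y, x⁆ := by rw [← lie_skew x y]
lemma qlie_lie (x y z : QN k n) : ⁅⁅x, y⁆, z⁆ = ⁅x, ⁅y, z⁆⁆ - ⁅y, ⁅x, z⁆⁆ := lie_lie x y z
lemma qlie_self (x : QN k n) : ⁅x, x⁆ = 0 := lie_self x

variable (n)

noncomputable def pih : L →ₗ⁅k⁆ QN k n :=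
  { (LieModule.lowerCentralSeries k L L 3).toSubmodule.mkQ with
    map_lie' := rfl }

lemma pih_surj : Function.Surjective (pih k n) := Submodule.Quotient.mk_surjective _

lemma quad (a b c d : QN k n) : ⁅a, ⁅b, ⁅c, d⁆⁆⁆ = 0 := by
  obtain ⟨a', rfl⟩ := pih_surj k n a
  obtain ⟨b', rfl⟩ := pih_surj k n b
  obtain ⟨c', rfl⟩ := pih_surj k n c
  obtain ⟨d', rfl⟩ := pih_surj k n d
  rw [← LieHom.map_lie, ← LieHom.map_lie, ← LieHom.map_lie]
  have h1 : ⁅c', d'⁆ ∈ LieModule.lowerCentralSeries k L L 1 := by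
    rw [LieModule.lowerCentralSeries_succ]
    exact LieSubmodule.lie_mem_lie (LieSubmodule.mem_top _) (LieSubmodule.mem_top _)
  have h2 : ⁅b', ⁅c', d'⁆⁆ ∈ LieModule.lowerCentralSeries k L L 2 := by
    rw [LieModule.lowerCentralSeries_succ]
    exact LieSubmodule.lie_mem_lie (LieSubmodule.mem_top _) h1
  have h3 : ⁅a', ⁅b', ⁅c', d'⁆⁆⁆ ∈ LieModule.lowerCentralSeries k L L 3 := by
    rw [show (3:ℕ) = 2 + 1 from rfl, LieModule.lowerCentralSeries_succ]
    exact LieSubmodule.lie_mem_lie (LieSubmodule.mem_top _) h2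
  show Submodule.mkQ _ _ = 0
  rwa [Submodule.mkQ_apply, Submodule.Quotient.mk_eq_zero]

lemma quad2 (a b c d : QN k n) : ⁅a, ⁅⁅b, c⁆, d⁆⁆ = 0 := by
  rw [qlie_lie, qlie_sub, quad, quad, sub_zero]

lemma quad5 (a b c d : QN k n) : ⁅⁅a, b⁆, ⁅c, d⁆⁆ = 0 := by
  rw [qlie_lie, quad, quad, sub_zero]

lemma quad4 (a b c d : QN k n) : ⁅⁅⁅a, b⁆, c⁆, d⁆ = 0 := by
  rw [qlie_lie, quad5, quad2, sub_zero]

lemma quad3 (a b c d : QN k n) : ⁅⁅a, ⁅b, c⁆⁆, d⁆ = 0 := by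
  rw [qlie_lie, quad2, quad5, sub_zero]

/-- the generators of `QN`. -/
noncomputable def vg (i : Fin n) : QN k n := pih k n (FreeLieAlgebra.of k i)

lemma lieSpan_range_of_eq_top :
    LieSubalgebra.lieSpan k (FreeLieAlgebra k (Fin n)) (Set.range (FreeLieAlgebra.of k)) = ⊤ := by
  set K := LieSubalgebra.lieSpan k (FreeLieAlgebra k (Fin n)) (Set.range (FreeLieAlgebra.of k))
    with hK
  let g : L →ₗ⁅k⁆ K := FreeLieAlgebra.lift k fun i =>
    ⟨FreeLieAlgebra.of k i, LieSubalgebra.subset_lieSpan ⟨i, rfl⟩⟩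
  have hcomp : K.incl.comp g = LieHom.id := by
    apply FreeLieAlgebra.hom_ext
    intro x
    simp [g]
  rw [eq_top_iff]
  intro x _
  have hx : K.incl (g x) = x := by
    have := LieHom.congr_fun hcomp x
    simpa using this
  rw [← hx]
  exact (g x).2

def SGen : Set (QN k n) :=
  {x | (∃ p, x = vg k n p) ∨ (∃ p q, x = ⁅vg k n p, vg k n q⁆) ∨
    ∃ p q r, x = ⁅⁅vg k n p, vg k n q⁆, vg k n r⁆}

lemma span_SGen : Submodule.span k (SGen k n) = ⊤ := by
  have hbr : ∀ a ∈ Submodule.span k (SGen k n), ∀ b ∈ Submodule.span k (SGen k n),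
      ⁅a, b⁆ ∈ Submodule.span k (SGen k n) := by
    intro a ha b hb
    induction ha, hb using Submodule.span_induction₂ with
    | mem_mem x y hx hy =>
      rcases hx with ⟨p, rfl⟩ | ⟨p, q, rfl⟩ | ⟨p, q, r, rfl⟩ <;>
        rcases hy with ⟨s, rfl⟩ | ⟨s, t, rfl⟩ | ⟨s, t, u, rfl⟩
      · exact Submodule.subset_span (Or.inr (Or.inl ⟨p, s, rfl⟩))
      · rw [qlie_skew]
        exact Submodule.neg_mem _ (Submodule.subset_span (Or.inr (Or.inr ⟨s, t, p, rfl⟩)))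
      · rw [quad2]; exact Submodule.zero_mem _
      · exact Submodule.subset_span (Or.inr (Or.inr ⟨p, q, s, rfl⟩))
      · rw [quad5]; exact Submodule.zero_mem _
      · rw [quad2]; exact Submodule.zero_mem _
      · rw [quad4]; exact Submodule.zero_mem _
      · rw [quad5]; exact Submodule.zero_mem _
      · rw [quad2]; exact Submodule.zero_mem _
    | zero_left y hy => rw [qzero_lie]; exact Submodule.zero_mem _
    | zero_right x hx => rw [qlie_zero]; exact Submodule.zero_mem _
    | add_left x y z _ _ _ h1 h2 => rw [qadd_lie]; exact Submodule.add_mem _ h1 h2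
    | add_right x y z _ _ _ h1 h2 => rw [qlie_add]; exact Submodule.add_mem _ h1 h2
    | smul_left r x y _ _ h => rw [qsmul_lie]; exact Submodule.smul_mem _ _ h
    | smul_right r x y _ _ h => rw [qlie_smul]; exact Submodule.smul_mem _ _ h
  let K : LieSubalgebra k (QN k n) :=
    { Submodule.span k (SGen k n) with lie_mem' := fun hx hy => hbr _ hx _ hy }
  have hsub : Set.range (FreeLieAlgebra.of k (X := Fin n)) ⊆ ((K.comap (pih k n)) : Set L) := by
    rintro x ⟨i, rfl⟩
    exact Submodule.subset_span (Or.inl ⟨i, rfl⟩)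
  have hall : ∀ x : L, pih k n x ∈ K := by
    intro x
    have hx : x ∈ LieSubalgebra.lieSpan k (FreeLieAlgebra k (Fin n))
        (Set.range (FreeLieAlgebra.of k)) := by
      rw [lieSpan_range_of_eq_top]; trivial
    exact (LieSubalgebra.lieSpan_le.mpr hsub) hx
  rw [eq_top_iff]
  intro q _
  obtain ⟨x, rfl⟩ := pih_surj k n q
  exact hall x

section Targets
variable {k}

/-- If triple brackets vanish, the third lower central series term is trivial. -/
lemma lcs3_eq_bot_of_triple {g : Type*} [LieRing g] [LieAlgebra k g]
    (h : ∀ a b c : g, ⁅a, ⁅b, c⁆⁆ = 0) :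
    LieModule.lowerCentralSeries k g g 3 = ⊥ := by
  have h1 : LieModule.lowerCentralSeries k g g 1 = ⁅(⊤ : LieIdeal k g), (⊤ : LieSubmodule k g g)⁆ := by
    rw [show (1:ℕ) = 0 + 1 from rfl, LieModule.lowerCentralSeries_succ,
      LieModule.lowerCentralSeries_zero]
  have h2 : LieModule.lowerCentralSeries k g g 2 = ⊥ := by
    rw [show (2:ℕ) = 1 + 1 from rfl, LieModule.lowerCentralSeries_succ,
      LieSubmodule.lie_eq_bot_iff]
    intro x _ m hm
    rw [h1] at hm
    have hm' : m ∈ LieSubmodule.toSubmodule ⁅(⊤ : LieIdeal k g), (⊤ : LieSubmodule k g g)⁆ := hm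
    rw [LieSubmodule.lieIdeal_oper_eq_linear_span'] at hm'
    clear hm
    induction hm' using Submodule.span_induction with
    | mem m hmem =>
      obtain ⟨a, -, b, -, rfl⟩ := hmem
      exact h x a b
    | zero => exact lie_zero x
    | add u v _ _ hu hv => rw [lie_add, hu, hv, add_zero]
    | smul t u _ hu => rw [lie_smul, hu, smul_zero]
  rw [show (3:ℕ) = 2 + 1 from rfl, LieModule.lowerCentralSeries_succ, h2,
    LieSubmodule.lie_bot]

end Targets

section Heisenberg

/-- The 3-dimensional Heisenberg Lie algebra, used to extract degree-2 coordinates. -/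
def Heis (k : Type*) [Field k] : Type _ := k × k × k

variable {k}

instance : AddCommGroup (Heis k) := inferInstanceAs (AddCommGroup (k × k × k))
instance : Module k (Heis k) := inferInstanceAs (Module k (k × k × k))

namespace Heis

def mk3 (a b c : k) : Heis k := (a, b, c)
def c1 (x : Heis k) : k := x.1
def c2 (x : Heis k) : k := x.2.1
def c3 (x : Heis k) : k := x.2.2

lemma ext3 {x y : Heis k} (h1 : c1 x = c1 y) (h2 : c2 x = c2 y) (h3 : c3 x = c3 y) : x = y :=
  Prod.ext h1 (Prod.ext h2 h3)

@[simp] lemma c1_add (x y : Heis k) : c1 (x + y) = c1 x + c1 y := rfl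
@[simp] lemma c2_add (x y : Heis k) : c2 (x + y) = c2 x + c2 y := rfl
@[simp] lemma c3_add (x y : Heis k) : c3 (x + y) = c3 x + c3 y := rfl
@[simp] lemma c1_smul (t : k) (x : Heis k) : c1 (t • x) = t * c1 x := rfl
@[simp] lemma c2_smul (t : k) (x : Heis k) : c2 (t • x) = t * c2 x := rfl
@[simp] lemma c3_smul (t : k) (x : Heis k) : c3 (t • x) = t * c3 x := rfl
@[simp] lemma c1_zero : c1 (0 : Heis k) = 0 := rfl
@[simp] lemma c2_zero : c2 (0 : Heis k) = 0 := rfl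
@[simp] lemma c3_zero : c3 (0 : Heis k) = 0 := rfl
@[simp] lemma c1_mk3 (a b c : k) : c1 (mk3 a b c) = a := rfl
@[simp] lemma c2_mk3 (a b c : k) : c2 (mk3 a b c) = b := rfl
@[simp] lemma c3_mk3 (a b c : k) : c3 (mk3 a b c) = c := rfl

instance : LieRing (Heis k) where
  bracket x y := mk3 0 0 (c1 x * c2 y - c1 y * c2 x)
  add_lie x y z := by apply ext3 <;> simp <;> ring
  lie_add x y z := by apply ext3 <;> simp <;> ring
  lie_self x := by apply ext3 <;> simp <;> ring
  leibniz_lie x y z := by apply ext3 <;> simp <;> ring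

@[simp] lemma c1_bracket (x y : Heis k) : c1 ⁅x, y⁆ = 0 := rfl
@[simp] lemma c2_bracket (x y : Heis k) : c2 ⁅x, y⁆ = 0 := rfl
@[simp] lemma c3_bracket (x y : Heis k) : c3 ⁅x, y⁆ = c1 x * c2 y - c1 y * c2 x := rfl

instance : LieAlgebra k (Heis k) where
  lie_smul t x y := by apply ext3 <;> simp <;> ring

lemma triple (a b c : Heis k) : ⁅a, ⁅b, c⁆⁆ = 0 := by
  apply ext3 <;> simp

/-- the projection onto the center coordinate -/
def z : Heis k →ₗ[k] k where
  toFun := c3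
  map_add' x y := rfl
  map_smul' t x := rfl

@[simp] lemma z_apply (x : Heis k) : z x = c3 x := rfl

end Heis

end Heisenberg

section Coords

variable {g : Type*} [LieRing g] [LieAlgebra k g]

attribute [local instance 100] LieRing.ofAssociativeRing

/-- Lift a map on generators to a linear map out of the 3-step quotient, provided the target
has vanishing `lcs 3`. -/
noncomputable def liftQ (f : Fin n → g)
    (hg : LieModule.lowerCentralSeries k g g 3 = ⊥) : QN k n →ₗ[k] g :=
  Submodule.liftQ _ (FreeLieAlgebra.lift k f).toLinearMap (by
    intro x hx
    have h1 : (FreeLieAlgebra.lift k f) x ∈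
        LieIdeal.map (FreeLieAlgebra.lift k f) (LieModule.lowerCentralSeries k L L 3) :=
      LieIdeal.mem_map hx
    have h2 := LieIdeal.map_lowerCentralSeries_le (R := k) 3 (f := FreeLieAlgebra.lift k f)
    rw [hg] at h2
    have h3 := h2 h1
    simpa using h3)

lemma liftQ_pih (f : Fin n → g) (hg : LieModule.lowerCentralSeries k g g 3 = ⊥)
    (x : L) : liftQ k n f hg (pih k n x) = FreeLieAlgebra.lift k f x := rfl

lemma liftQ_vg (f : Fin n → g) (hg : LieModule.lowerCentralSeries k g g 3 = ⊥)
    (p : Fin n) : liftQ k n f hg (vg k n p) = f p := by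
  rw [vg, liftQ_pih, FreeLieAlgebra.lift_of_apply]

lemma liftQ_bracket (f : Fin n → g) (hg : LieModule.lowerCentralSeries k g g 3 = ⊥)
    (a b : QN k n) : liftQ k n f hg ⁅a, b⁆ = ⁅liftQ k n f hg a, liftQ k n f hg b⁆ := by
  obtain ⟨a', rfl⟩ := pih_surj k n a
  obtain ⟨b', rfl⟩ := pih_surj k n b
  rw [← LieHom.map_lie, liftQ_pih, liftQ_pih, liftQ_pih, LieHom.map_lie]

lemma lcs3_k : LieModule.lowerCentralSeries k k k 3 = ⊥ := by
  apply lcs3_eq_bot_of_triple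
  intro a b c
  have : ⁅b, c⁆ = (0:k) := by
    rw [LieRing.of_associative_ring_bracket, mul_comm, sub_self]
  rw [this, lie_zero]

lemma lcs3_Heis : LieModule.lowerCentralSeries k (Heis k) (Heis k) 3 = ⊥ :=
  lcs3_eq_bot_of_triple fun a b c => Heis.triple a b c

/-- degree-1 coordinate functionals -/
noncomputable def cf (i : Fin n) : QN k n →ₗ[k] k :=
  liftQ k n (fun p => if p = i then (1:k) else 0) (lcs3_k k)

lemma cf_vg (i p : Fin n) : cf k n i (vg k n p) = if p = i then 1 else 0 := by
  rw [cf, liftQ_vg]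

lemma cf_bracket (i : Fin n) (a b : QN k n) : cf k n i ⁅a, b⁆ = 0 := by
  rw [cf, liftQ_bracket, LieRing.of_associative_ring_bracket, mul_comm, sub_self]

/-- generator map for the Heisenberg coordinate extraction -/
noncomputable def fh (i j : Fin n) : Fin n → Heis k := fun p =>
  if p = i then Heis.mk3 1 0 0 else if p = j then Heis.mk3 0 1 0 else 0

@[simp] lemma c1_fh (i j p : Fin n) : Heis.c1 (fh k n i j p) = if p = i then 1 else 0 := by
  rw [fh]; split_ifs <;> simp

@[simp] lemma c2_fh (i j p : Fin n) :
    Heis.c2 (fh k n i j p) = if p = i then 0 else if p = j then 1 else 0 := by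
  rw [fh]; split_ifs <;> simp

/-- degree-2 coordinate functionals -/
noncomputable def df (i j : Fin n) : QN k n →ₗ[k] k :=
  Heis.z.comp (liftQ k n (fh k n i j) (lcs3_Heis k))

lemma df_vg (i j p : Fin n) : df k n i j (vg k n p) = 0 := by
  rw [df, LinearMap.comp_apply, liftQ_vg, Heis.z_apply, fh]
  split_ifs <;> simp

lemma df_bb (i j p q : Fin n) :
    df k n i j ⁅vg k n p, vg k n q⁆ =
      (if p = i then 1 else 0) * (if q = j then 1 else 0) -
      (if q = i then 1 else 0) * (if p = j then 1 else 0) := by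
  rw [df, LinearMap.comp_apply, liftQ_bracket, liftQ_vg, liftQ_vg, Heis.z_apply,
    Heis.c3_bracket, c1_fh, c2_fh, c1_fh, c2_fh]
  split_ifs <;> simp_all

lemma df_lie3l (i j : Fin n) (a b c : QN k n) : df k n i j ⁅⁅a, b⁆, c⁆ = 0 := by
  rw [df, LinearMap.comp_apply, liftQ_bracket, liftQ_bracket, Heis.z_apply,
    Heis.c3_bracket, Heis.c1_bracket, Heis.c2_bracket]
  ring

lemma df_lie3r (i j : Fin n) (a b c : QN k n) : df k n i j ⁅a, ⁅b, c⁆⁆ = 0 := by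
  rw [df, LinearMap.comp_apply, liftQ_bracket, liftQ_bracket, Heis.z_apply,
    Heis.c3_bracket, Heis.c1_bracket, Heis.c2_bracket]
  ring

end Coords

section Prod

/-- degree-1 projection -/
noncomputable def P1 : QN k n →ₗ[k] QN k n := ∑ i, (cf k n i).smulRight (vg k n i)

/-- the degree-3 basis-ish elements used in the Novikov product -/
noncomputable def ww (i j l : Fin n) : QN k n :=
  if i < l then ⁅⁅vg k n i, vg k n (min j l)⁆, vg k n (max j l)⁆ else 0

/-- triangular degree-1 times degree-1 product -/
noncomputable def T1 : QN k n →ₗ[k] QN k n →ₗ[k] QN k n :=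
  ∑ i, ∑ j, (cf k n i).smulRight ((cf k n j).smulRight
    (if i < j then ⁅vg k n i, vg k n j⁆ else 0))

/-- the (degree-2) ⋅ (degree-1) product -/
noncomputable def rh : QN k n →ₗ[k] QN k n →ₗ[k] QN k n :=
  ∑ i, ∑ j, ∑ l, (df k n i j).smulRight ((cf k n l).smulRight
    (if i < j then (2:k)⁻¹ • ww k n i j l else 0))

/-- the bracket as a bilinear map -/
noncomputable def br2 : QN k n →ₗ[k] QN k n →ₗ[k] QN k n :=
  LinearMap.mk₂ k (fun a b => ⁅a, b⁆) (qadd_lie k) (qsmul_lie k) (qlie_add k) (qlie_smul k)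

/-- the Novikov product -/
noncomputable def mprod : QN k n →ₗ[k] QN k n →ₗ[k] QN k n :=
  T1 k n + (br2 k n).comp (P1 k n) - ((br2 k n).comp (P1 k n)).compl₂ (P1 k n) +
    (rh k n).flip + rh k n

lemma P1_apply (x : QN k n) : P1 k n x = ∑ i, cf k n i x • vg k n i := by
  simp [P1, LinearMap.sum_apply, LinearMap.smulRight_apply]

lemma T1_apply (x y : QN k n) : T1 k n x y =
    ∑ i, ∑ j, cf k n i x • (cf k n j y •
      (if i < j then ⁅vg k n i, vg k n j⁆ else 0)) := by
  simp [T1, LinearMap.sum_apply, LinearMap.smulRight_apply]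

lemma rh_apply (a u : QN k n) : rh k n a u =
    ∑ i, ∑ j, ∑ l, df k n i j a • (cf k n l u •
      (if i < j then (2:k)⁻¹ • ww k n i j l else 0)) := by
  simp [rh, LinearMap.sum_apply, LinearMap.smulRight_apply]

lemma mprod_apply (x y : QN k n) : mprod k n x y =
    T1 k n x y + ⁅P1 k n x, y⁆ - ⁅P1 k n x, P1 k n y⁆ + rh k n y x + rh k n x y := by
  simp [mprod, br2, LinearMap.add_apply, LinearMap.sub_apply, LinearMap.comp_apply,
    LinearMap.compl₂_apply, LinearMap.flip_apply, LinearMap.mk₂_apply]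

lemma sum_delta {V : Type*} [AddCommMonoid V] [Module k V] (p : Fin n) (f : Fin n → V) :
    ∑ i, (if p = i then (1:k) else 0) • f i = f p := by
  simp [ite_smul, Finset.sum_ite_eq]

-- evaluation lemmas
lemma P1_vg (p : Fin n) : P1 k n (vg k n p) = vg k n p := by
  rw [P1_apply]
  simp only [cf_vg]
  exact sum_delta k n p _

lemma P1_bracket (a b : QN k n) : P1 k n ⁅a, b⁆ = 0 := by
  rw [P1_apply]
  simp [cf_bracket]

lemma cf_ww (i' i j l : Fin n) : cf k n i' (ww k n i j l) = 0 := by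
  rw [ww]; split_ifs <;> simp [cf_bracket]

lemma df_ww (a b i j l : Fin n) : df k n a b (ww k n i j l) = 0 := by
  rw [ww]; split_ifs
  · exact df_lie3l k n a b _ _ _
  · simp

lemma P1_ww (i j l : Fin n) : P1 k n (ww k n i j l) = 0 := by
  rw [ww]; split_ifs <;> simp [P1_bracket]

lemma T1_vv (p q : Fin n) : T1 k n (vg k n p) (vg k n q) =
    (if p < q then ⁅vg k n p, vg k n q⁆ else 0) := by
  rw [T1_apply]
  simp only [cf_vg]
  rw [show (∑ i, ∑ j, (if p = i then (1:k) else 0) • ((if q = j then (1:k) else 0) •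
      (if i < j then ⁅vg k n i, vg k n j⁆ else 0))) =
    ∑ i, (if p = i then (1:k) else 0) • (∑ j, (if q = j then (1:k) else 0) •
      (if i < j then ⁅vg k n i, vg k n j⁆ else 0)) from by
      refine Finset.sum_congr rfl fun i _ => ?_
      rw [Finset.smul_sum], sum_delta k n p, sum_delta k n q]

lemma cf_T1 (i' : Fin n) (x y : QN k n) : cf k n i' (T1 k n x y) = 0 := by
  rw [T1_apply]
  simp [map_sum, map_smul, apply_ite (cf k n i'), cf_bracket]

lemma df_rh (a b : Fin n) (x u : QN k n) : df k n a b (rh k n x u) = 0 := by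
  rw [rh_apply]
  simp [map_sum, map_smul, apply_ite (df k n a b), df_ww]

lemma cf_rh (i' : Fin n) (x u : QN k n) : cf k n i' (rh k n x u) = 0 := by
  rw [rh_apply]
  simp [map_sum, map_smul, apply_ite (cf k n i'), cf_ww]

lemma P1_T1 (x y : QN k n) : P1 k n (T1 k n x y) = 0 := by
  rw [T1_apply]
  simp [map_sum, map_smul, apply_ite (P1 k n), P1_bracket]

lemma P1_rh (x u : QN k n) : P1 k n (rh k n x u) = 0 := by
  rw [rh_apply]
  simp [map_sum, map_smul, apply_ite (P1 k n), P1_ww]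

lemma rh_vg_left (p : Fin n) (u : QN k n) : rh k n (vg k n p) u = 0 := by
  rw [rh_apply]
  simp [df_vg]

lemma T1_bracket_left (a b y : QN k n) : T1 k n ⁅a, b⁆ y = 0 := by
  rw [T1_apply]; simp [cf_bracket]

lemma T1_bracket_right (x a b : QN k n) : T1 k n x ⁅a, b⁆ = 0 := by
  rw [T1_apply]; simp [cf_bracket]

lemma rh_bracket_right (x a b : QN k n) : rh k n x ⁅a, b⁆ = 0 := by
  rw [rh_apply]; simp [cf_bracket]

end Prod

section Structural

lemma mem_span_SGen (x : QN k n) : x ∈ Submodule.span k (SGen k n) := by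
  rw [span_SGen]; trivial

/-- degree ≥ 2 parts bracket to zero -/
lemma brk_sub_P1 (x y : QN k n) : ⁅x - P1 k n x, y - P1 k n y⁆ = 0 := by
  induction mem_span_SGen k n x, mem_span_SGen k n y using Submodule.span_induction₂ with
  | mem_mem x y hx hy =>
    rcases hx with ⟨p, rfl⟩ | ⟨p, q, rfl⟩ | ⟨p, q, r, rfl⟩ <;>
      rcases hy with ⟨s, rfl⟩ | ⟨s, t, rfl⟩ | ⟨s, t, u, rfl⟩ <;>
      simp only [P1_vg, P1_bracket, sub_self, sub_zero, qzero_lie, qlie_zero] <;>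
      first
        | rfl
        | exact quad5 k n _ _ _ _
        | exact quad2 k n _ _ _ _
        | exact quad4 k n _ _ _ _
  | zero_left y hy => simp [qzero_lie]
  | zero_right x hx => simp [qlie_zero]
  | add_left x x' y _ _ _ h1 h2 =>
    have e : (x + x') - P1 k n (x + x') = (x - P1 k n x) + (x' - P1 k n x') := by
      rw [map_add]; abel
    rw [e, qadd_lie, h1, h2, add_zero]
  | add_right x y y' _ _ _ h1 h2 =>
    have e : (y + y') - P1 k n (y + y') = (y - P1 k n y) + (y' - P1 k n y') := by
      rw [map_add]; abel
    rw [e, qlie_add, h1, h2, add_zero]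
  | smul_left t x y _ _ h =>
    have e : (t • x) - P1 k n (t • x) = t • (x - P1 k n x) := by
      rw [map_smul, smul_sub]
    rw [e, qsmul_lie, h, smul_zero]
  | smul_right t x y _ _ h =>
    have e : (t • y) - P1 k n (t • y) = t • (y - P1 k n y) := by
      rw [map_smul, smul_sub]
    rw [e, qlie_smul, h, smul_zero]

lemma df_vg_sub_P1 (i j p : Fin n) (y : QN k n) :
    df k n i j ⁅vg k n p, y - P1 k n y⁆ = 0 := by
  induction mem_span_SGen k n y using Submodule.span_induction with
  | mem y hy =>
    rcases hy with ⟨s, rfl⟩ | ⟨s, t, rfl⟩ | ⟨s, t, u, rfl⟩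
    · rw [P1_vg, sub_self, qlie_zero, map_zero]
    · rw [P1_bracket, sub_zero]
      exact df_lie3r k n i j _ _ _
    · rw [P1_bracket, sub_zero, quad2, map_zero]
  | zero => rw [map_zero, sub_zero, qlie_zero, map_zero]
  | add y y' _ _ h1 h2 =>
    have e : (y + y') - P1 k n (y + y') = (y - P1 k n y) + (y' - P1 k n y') := by
      rw [map_add]; abel
    rw [e, qlie_add, map_add, h1, h2, add_zero]
  | smul t y _ h =>
    have e : (t • y) - P1 k n (t • y) = t • (y - P1 k n y) := by rw [map_smul, smul_sub]
    rw [e, qlie_smul, map_smul, h, smul_zero]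

lemma quad_vg_vg_sub_P1 (p q : Fin n) (z : QN k n) :
    ⁅vg k n p, ⁅vg k n q, z - P1 k n z⁆⁆ = 0 := by
  induction mem_span_SGen k n z using Submodule.span_induction with
  | mem z hz =>
    rcases hz with ⟨s, rfl⟩ | ⟨s, t, rfl⟩ | ⟨s, t, u, rfl⟩
    · rw [P1_vg, sub_self, qlie_zero, qlie_zero]
    · rw [P1_bracket, sub_zero]
      exact quad k n _ _ _ _
    · rw [P1_bracket, sub_zero, quad2, qlie_zero]
  | zero => rw [map_zero, sub_zero, qlie_zero, qlie_zero]
  | add z z' _ _ h1 h2 =>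
    have e : (z + z') - P1 k n (z + z') = (z - P1 k n z) + (z' - P1 k n z') := by
      rw [map_add]; abel
    rw [e, qlie_add, qlie_add, h1, h2, add_zero]
  | smul t z _ h =>
    have e : (t • z) - P1 k n (t • z) = t • (z - P1 k n z) := by rw [map_smul, smul_sub]
    rw [e, qlie_smul, qlie_smul, h, smul_zero]

end Structural

section Reductions

lemma br2_apply (a b : QN k n) : br2 k n a b = ⁅a, b⁆ := rfl

lemma lie_sum_left (f : Fin n → QN k n) (y : QN k n) :
    ⁅∑ i, f i, y⁆ = ∑ i, ⁅f i, y⁆ := by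
  rw [← br2_apply, map_sum, LinearMap.sum_apply]
  simp [br2_apply]

lemma lie_sum_right (x : QN k n) (f : Fin n → QN k n) :
    ⁅x, ∑ i, f i⁆ = ∑ i, ⁅x, f i⁆ := by
  rw [← br2_apply, map_sum]
  simp [br2_apply]

lemma lie_ww (x : QN k n) (i j l : Fin n) : ⁅x, ww k n i j l⁆ = 0 := by
  rw [ww]; split_ifs
  · exact quad2 k n _ _ _ _
  · exact qlie_zero k x

lemma lie_rh (x a u : QN k n) : ⁅x, rh k n a u⁆ = 0 := by
  rw [rh_apply]
  rw [lie_sum_right]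
  refine Finset.sum_eq_zero fun i _ => ?_
  rw [lie_sum_right]
  refine Finset.sum_eq_zero fun j _ => ?_
  rw [lie_sum_right]
  refine Finset.sum_eq_zero fun l _ => ?_
  rw [qlie_smul, qlie_smul]
  split_ifs
  · rw [qlie_smul, lie_ww, smul_zero, smul_zero, smul_zero]
  · rw [qlie_zero, smul_zero, smul_zero]

lemma cf_m (i : Fin n) (x y : QN k n) : cf k n i (mprod k n x y) = 0 := by
  rw [mprod_apply]
  simp [map_add, map_sub, cf_T1, cf_bracket, cf_rh]

lemma P1_m (x y : QN k n) : P1 k n (mprod k n x y) = 0 := by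
  rw [mprod_apply]
  simp [map_add, map_sub, P1_T1, P1_bracket, P1_rh]

lemma df_m (i j : Fin n) (x y : QN k n) :
    df k n i j (mprod k n x y) = df k n i j (T1 k n x y) := by
  rw [mprod_apply]
  have h1 : ⁅P1 k n x, y⁆ - ⁅P1 k n x, P1 k n y⁆ = ⁅P1 k n x, y - P1 k n y⁆ := by
    rw [qlie_sub]
  have h2 : df k n i j ⁅P1 k n x, y - P1 k n y⁆ = 0 := by
    rw [P1_apply, lie_sum_left, map_sum]
    refine Finset.sum_eq_zero fun p _ => ?_
    rw [qsmul_lie, map_smul, df_vg_sub_P1, smul_zero]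
  rw [← sub_eq_zero, ← map_sub (df k n i j)]
  rw [show T1 k n x y + ⁅P1 k n x, y⁆ - ⁅P1 k n x, P1 k n y⁆ + rh k n y x + rh k n x y
      - T1 k n x y = ⁅P1 k n x, y - P1 k n y⁆ + (rh k n y x + rh k n x y) from by
    rw [qlie_sub]; abel]
  rw [map_add, map_add, h2, df_rh, df_rh]
  simp

lemma rh_congr_left {a a' : QN k n} (h : ∀ i j, df k n i j a = df k n i j a') (u : QN k n) :
    rh k n a u = rh k n a' u := by
  rw [rh_apply, rh_apply]
  refine Finset.sum_congr rfl fun i _ => Finset.sum_congr rfl fun j _ =>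
    Finset.sum_congr rfl fun l _ => ?_
  rw [h]

lemma rh_right_m (x y z : QN k n) : rh k n x (mprod k n y z) = 0 := by
  rw [rh_apply]
  simp [cf_m]

lemma T1_left_m (x y z : QN k n) : T1 k n (mprod k n x y) z = 0 := by
  rw [T1_apply]
  simp [cf_m]

lemma T1_right_m (x y z : QN k n) : T1 k n x (mprod k n y z) = 0 := by
  rw [T1_apply]
  simp [cf_m]

/-- `m (m x y) z = ρ (T1 x y) z` -/
lemma m_m_left (x y z : QN k n) :
    mprod k n (mprod k n x y) z = rh k n (T1 k n x y) z := by
  rw [mprod_apply, T1_left_m, P1_m, qzero_lie, qzero_lie, rh_right_m]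
  rw [rh_congr_left k n (fun i j => df_m k n i j x y) z]
  abel

/-- `m x (m y z) = ⁅P1 x, T1 y z⁆ + ρ (T1 y z) x` -/
lemma m_m_right (x y z : QN k n) :
    mprod k n x (mprod k n y z) = ⁅P1 k n x, T1 k n y z⁆ + rh k n (T1 k n y z) x := by
  rw [mprod_apply, T1_right_m, P1_m, qlie_zero, rh_right_m]
  rw [rh_congr_left k n (fun i j => df_m k n i j y z) x]
  have hexp : ⁅P1 k n x, mprod k n y z⁆ = ⁅P1 k n x, T1 k n y z⁆ := by
    rw [mprod_apply, qlie_add, qlie_add, qlie_sub, qlie_add, lie_rh, lie_rh]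
    have h1 : ⁅P1 k n x, ⁅P1 k n y, z⁆⁆ - ⁅P1 k n x, ⁅P1 k n y, P1 k n z⁆⁆ = 0 := by
      rw [← qlie_sub, ← qlie_sub]
      rw [P1_apply k n x, lie_sum_left]
      refine Finset.sum_eq_zero fun p _ => ?_
      rw [qsmul_lie]
      rw [show ⁅P1 k n y, z - P1 k n z⁆ = ∑ q, cf k n q y • ⁅vg k n q, z - P1 k n z⁆ from by
        rw [P1_apply, lie_sum_left]
        exact Finset.sum_congr rfl fun q _ => by rw [qsmul_lie]]
      rw [lie_sum_right]
      rw [Finset.sum_eq_zero fun q _ => by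
        rw [qlie_smul, quad_vg_vg_sub_P1, smul_zero]]
      rw [smul_zero]
    rw [sub_eq_zero] at h1
    rw [h1]
    abel
  rw [hexp]
  abel

end Reductions

section Axioms23

lemma key3 (x y : QN k n) : T1 k n x y - T1 k n y x = ⁅P1 k n x, P1 k n y⁆ := by
  induction mem_span_SGen k n x, mem_span_SGen k n y using Submodule.span_induction₂ with
  | mem_mem x y hx hy =>
    rcases hx with ⟨p, rfl⟩ | ⟨p, q, rfl⟩ | ⟨p, q, r, rfl⟩ <;>
      rcases hy with ⟨s, rfl⟩ | ⟨s, t, rfl⟩ | ⟨s, t, u, rfl⟩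
    · rw [T1_vv, T1_vv, P1_vg, P1_vg]
      rcases lt_trichotomy p s with h | rfl | h
      · rw [if_pos h, if_neg (asymm h), sub_zero]
      · rw [if_neg (lt_irrefl p), sub_self, qlie_self]
      · rw [if_neg (asymm h), if_pos h, zero_sub, qlie_skew, neg_neg]
    all_goals
      simp [T1_bracket_left, T1_bracket_right, P1_bracket, P1_vg, qlie_zero, qzero_lie]
  | zero_left y hy => simp
  | zero_right x hx => simp [qlie_zero]
  | add_left x x' y _ _ _ h1 h2 =>
    simp only [map_add, LinearMap.add_apply, qadd_lie, ← h1, ← h2]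
    abel
  | add_right x y y' _ _ _ h1 h2 =>
    simp only [map_add, LinearMap.add_apply, qlie_add, ← h1, ← h2]
    abel
  | smul_left t x y _ _ h =>
    simp only [map_smul, LinearMap.smul_apply, qsmul_lie, ← h, smul_sub]
  | smul_right t x y _ _ h =>
    simp only [map_smul, LinearMap.smul_apply, qlie_smul, ← h, smul_sub]

/-- the commutator axiom -/
lemma comm_rule (x y : QN k n) : mprod k n x y - mprod k n y x = ⁅x, y⁆ := by
  have hb : ⁅x, y⁆ - ⁅x, P1 k n y⁆ - (⁅P1 k n x, y⁆ - ⁅P1 k n x, P1 k n y⁆) = 0 := by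
    have h0 := brk_sub_P1 k n x y
    rwa [qsub_lie, qlie_sub, qlie_sub] at h0
  have hb2 : ⁅x, y⁆ = ⁅x, P1 k n y⁆ + ⁅P1 k n x, y⁆ - ⁅P1 k n x, P1 k n y⁆ := by
    rw [← sub_eq_zero, ← hb]
    abel
  have hk := key3 k n x y
  rw [sub_eq_iff_eq_add] at hk
  rw [mprod_apply, mprod_apply, hk, qlie_skew k (P1 k n y) x, qlie_skew k (P1 k n y) (P1 k n x), hb2]
  abel

lemma sum_delta2 (p q : Fin n) (g : Fin n → Fin n → QN k n) :
    ∑ i, ∑ j, ((if p = i then (1:k) else 0) * (if q = j then (1:k) else 0) -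
      (if q = i then (1:k) else 0) * (if p = j then (1:k) else 0)) • g i j
    = g p q - g q p := by
  have e1 : ∀ r s : Fin n,
      (∑ i, ∑ j, ((if r = i then (1:k) else 0) * (if s = j then (1:k) else 0)) • g i j)
        = g r s := by
    intro r s
    have step : ∀ i : Fin n,
        (∑ j, ((if r = i then (1:k) else 0) * (if s = j then (1:k) else 0)) • g i j)
          = (if r = i then (1:k) else 0) • g i s := by
      intro i
      rw [show (∑ j, ((if r = i then (1:k) else 0) * (if s = j then (1:k) else 0)) • g i j)
          = (if r = i then (1:k) else 0) • ∑ j, (if s = j then (1:k) else 0) • g i j from by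
        rw [Finset.smul_sum]
        exact Finset.sum_congr rfl fun j _ => (mul_smul _ _ _), sum_delta k n s]
    rw [Finset.sum_congr rfl fun i _ => step i, sum_delta k n r]
  rw [show (∑ i, ∑ j, ((if p = i then (1:k) else 0) * (if q = j then (1:k) else 0) -
        (if q = i then (1:k) else 0) * (if p = j then (1:k) else 0)) • g i j)
      = (∑ i, ∑ j, ((if p = i then (1:k) else 0) * (if q = j then (1:k) else 0)) • g i j)
        - (∑ i, ∑ j, ((if q = i then (1:k) else 0) * (if p = j then (1:k) else 0)) • g i j) from by
    rw [← Finset.sum_sub_distrib]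
    refine Finset.sum_congr rfl fun i _ => ?_
    rw [← Finset.sum_sub_distrib]
    exact Finset.sum_congr rfl fun j _ => (sub_smul _ _ _), e1, e1]

lemma rh_bb_v (p q r : Fin n) : rh k n ⁅vg k n p, vg k n q⁆ (vg k n r) =
    (if p < q then (2:k)⁻¹ • ww k n p q r else 0) -
      (if q < p then (2:k)⁻¹ • ww k n q p r else 0) := by
  rw [rh_apply]
  simp only [df_bb, cf_vg]
  rw [Finset.sum_congr rfl fun i _ => Finset.sum_congr rfl fun j _ => by
    rw [← Finset.smul_sum, sum_delta k n r]]
  rw [sum_delta2 k n p q (fun i j => if i < j then (2:k)⁻¹ • ww k n i j r else 0)]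

lemma rho_T1_sym (x y z : QN k n) : rh k n (T1 k n x y) z = rh k n (T1 k n x z) y := by
  induction mem_span_SGen k n x using Submodule.span_induction with
  | mem x hx =>
    induction mem_span_SGen k n y using Submodule.span_induction with
    | mem y hy =>
      induction mem_span_SGen k n z using Submodule.span_induction with
      | mem z hz =>
        rcases hx with ⟨p, rfl⟩ | ⟨p, q, rfl⟩ | ⟨p, q, r, rfl⟩ <;>
          rcases hy with ⟨s, rfl⟩ | ⟨s, t, rfl⟩ | ⟨s, t, u, rfl⟩ <;>
          rcases hz with ⟨a, rfl⟩ | ⟨a, b, rfl⟩ | ⟨a, b, c, rfl⟩ <;>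
          try simp [T1_bracket_left, T1_bracket_right, rh_bracket_right]
        -- remaining: all three are generators
        rw [T1_vv, T1_vv]
        by_cases h1 : p < s <;> by_cases h2 : p < a
        · rw [if_pos h1, if_pos h2, rh_bb_v, rh_bb_v, if_pos h1, if_pos h2,
            if_neg (asymm h1), if_neg (asymm h2), sub_zero, sub_zero, ww, ww,
            if_pos h2, if_pos h1, min_comm, max_comm]
        · rw [if_pos h1, if_neg h2, rh_bb_v, if_pos h1, if_neg (asymm h1), sub_zero,
            ww, if_neg h2, map_zero, LinearMap.zero_apply, smul_zero]
        · rw [if_neg h1, if_pos h2, rh_bb_v, if_pos h2, if_neg (asymm h2), sub_zero,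
            ww, if_neg h1, map_zero, LinearMap.zero_apply, smul_zero]
        · rw [if_neg h1, if_neg h2, map_zero, LinearMap.zero_apply, LinearMap.zero_apply]
      | zero => simp
      | add z z' _ _ h1 h2 => simp only [map_add, LinearMap.add_apply, h1, h2]
      | smul t z _ h => simp only [map_smul, LinearMap.smul_apply, h]
    | zero => simp
    | add y y' _ _ h1 h2 => simp only [map_add, LinearMap.add_apply, h1, h2]
    | smul t y _ h => simp only [map_smul, LinearMap.smul_apply, h]
  | zero => simp
  | add x x' _ _ h1 h2 => simp only [map_add, LinearMap.add_apply, h1, h2]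
  | smul t x _ h => simp only [map_smul, LinearMap.smul_apply, h]

/-- the Novikov axiom -/
lemma nov_rule (x y z : QN k n) :
    mprod k n (mprod k n x y) z = mprod k n (mprod k n x z) y := by
  rw [m_m_left, m_m_left, rho_T1_sym]

end Axioms23

section Axiom1

lemma half_add (a : QN k n) : (2:k)⁻¹ • a + (2:k)⁻¹ • a = a := by
  rw [← add_smul]
  norm_num

lemma core13 (p q r : Fin n) :
    ⁅vg k n p, T1 k n (vg k n q) (vg k n r)⁆ + rh k n (T1 k n (vg k n q) (vg k n r)) (vg k n p)
      - rh k n (T1 k n (vg k n p) (vg k n q)) (vg k n r)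
    = ⁅vg k n q, T1 k n (vg k n p) (vg k n r)⁆ + rh k n (T1 k n (vg k n p) (vg k n r)) (vg k n q)
      - rh k n (T1 k n (vg k n q) (vg k n p)) (vg k n r) := by
  rw [T1_vv, T1_vv, T1_vv, T1_vv]
  rcases lt_trichotomy p q with hpq | rfl | hpq
  · rcases lt_trichotomy q r with hqr | rfl | hqr
    · -- p < q < r
      have hpr := hpq.trans hqr
      simp only [rh_bb_v, ww, hpq, hqr, hpr, asymm hpq, asymm hqr, asymm hpr,
        min_eq_left hqr.le, max_eq_right hqr.le, min_eq_right hqr.le, max_eq_left hqr.le,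
        if_true, if_false, ite_true, ite_false, smul_zero, add_zero, zero_add, sub_zero,
        zero_sub, qlie_zero, qzero_lie, map_zero, LinearMap.zero_apply]
      rw [qlie_lie]
      module
    · -- p < q = r
      simp only [rh_bb_v, ww, hpq, asymm hpq, lt_irrefl, min_self, max_self,
        if_true, if_false, ite_true, ite_false, smul_zero, add_zero, zero_add, sub_zero,
        zero_sub, qlie_zero, qzero_lie, map_zero, LinearMap.zero_apply]
      rw [qlie_skew k (vg k n q) ⁅vg k n p, vg k n q⁆]
      module
    · rcases lt_trichotomy p r with hpr | rfl | hpr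
      · -- p < r < q
        simp only [rh_bb_v, ww, hpq, hqr, hpr, asymm hpq, asymm hqr, asymm hpr,
          min_eq_right hqr.le, max_eq_left hqr.le, min_eq_left hqr.le, max_eq_right hqr.le,
          if_true, if_false, ite_true, ite_false, smul_zero, add_zero, zero_add, sub_zero,
          zero_sub, qlie_zero, qzero_lie, map_zero, LinearMap.zero_apply]
        rw [qlie_skew k (vg k n q) ⁅vg k n p, vg k n r⁆]
        module
      · -- r = p < q
        simp only [rh_bb_v, ww, hpq, asymm hpq, lt_irrefl,
          if_true, if_false, ite_true, ite_false, smul_zero, add_zero, zero_add, sub_zero,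
          zero_sub, qlie_zero, qzero_lie, map_zero, LinearMap.zero_apply, neg_zero]
      · -- r < p < q
        simp only [rh_bb_v, ww, hpq, hqr, hpr, asymm hpq, asymm hqr, asymm hpr,
          if_true, if_false, ite_true, ite_false, smul_zero, add_zero, zero_add, sub_zero,
          zero_sub, qlie_zero, qzero_lie, map_zero, LinearMap.zero_apply, neg_zero]
  · rfl
  · rcases lt_trichotomy q r with hqr | rfl | hqr
    · rcases lt_trichotomy p r with hpr | rfl | hpr
      · -- q < p < r
        simp only [rh_bb_v, ww, hpq, hqr, hpr, asymm hpq, asymm hqr, asymm hpr,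
          min_eq_right hpr.le, max_eq_left hpr.le, min_eq_left hpr.le, max_eq_right hpr.le,
          if_true, if_false, ite_true, ite_false, smul_zero, add_zero, zero_add, sub_zero,
          zero_sub, qlie_zero, qzero_lie, map_zero, LinearMap.zero_apply]
        rw [qlie_lie]
        module
      · -- q < p = r
        simp only [rh_bb_v, ww, hpq, asymm hpq, lt_irrefl, min_self, max_self,
          if_true, if_false, ite_true, ite_false, smul_zero, add_zero, zero_add, sub_zero,
          zero_sub, qlie_zero, qzero_lie, map_zero, LinearMap.zero_apply]
        rw [qlie_skew k ⁅vg k n q, vg k n p⁆ (vg k n p)]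
        module
      · -- q < r < p
        simp only [rh_bb_v, ww, hpq, hqr, hpr, asymm hpq, asymm hqr, asymm hpr,
          min_eq_left hpr.le, max_eq_right hpr.le, min_eq_right hpr.le, max_eq_left hpr.le,
          if_true, if_false, ite_true, ite_false, smul_zero, add_zero, zero_add, sub_zero,
          zero_sub, qlie_zero, qzero_lie, map_zero, LinearMap.zero_apply]
        rw [qlie_skew k ⁅vg k n q, vg k n r⁆ (vg k n p)]
        module
    · -- q = r < p
      simp only [rh_bb_v, ww, hpq, asymm hpq, lt_irrefl,
        if_true, if_false, ite_true, ite_false, smul_zero, add_zero, zero_add, sub_zero,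
        zero_sub, qlie_zero, qzero_lie, map_zero, LinearMap.zero_apply, neg_zero]
    · -- r < q < p
      have hpr := hqr.trans hpq
      simp only [rh_bb_v, ww, hpq, hqr, hpr, asymm hpq, asymm hqr, asymm hpr,
        if_true, if_false, ite_true, ite_false, smul_zero, add_zero, zero_add, sub_zero,
        zero_sub, qlie_zero, qzero_lie, map_zero, LinearMap.zero_apply, neg_zero]

end Axiom1

lemma lsym_core (x y z : QN k n) :
    ⁅P1 k n x, T1 k n y z⁆ + rh k n (T1 k n y z) x - rh k n (T1 k n x y) z
    = ⁅P1 k n y, T1 k n x z⁆ + rh k n (T1 k n x z) y - rh k n (T1 k n y x) z := by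
  induction mem_span_SGen k n x using Submodule.span_induction with
  | mem x hx =>
    induction mem_span_SGen k n y using Submodule.span_induction with
    | mem y hy =>
      induction mem_span_SGen k n z using Submodule.span_induction with
      | mem z hz =>
        rcases hx with ⟨p, rfl⟩ | ⟨p, q, rfl⟩ | ⟨p, q, r, rfl⟩ <;>
          rcases hy with ⟨s, rfl⟩ | ⟨s, t, rfl⟩ | ⟨s, t, u, rfl⟩ <;>
          rcases hz with ⟨a, rfl⟩ | ⟨a, b, rfl⟩ | ⟨a, b, c, rfl⟩ <;>
          try simp [P1_bracket, T1_bracket_left, T1_bracket_right, rh_bracket_right,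
            qzero_lie, qlie_zero]
        rw [P1_vg, P1_vg]
        exact core13 k n p s a
      | zero => simp [qzero_lie, qlie_zero]
      | add z z' _ _ h1 h2 =>
        simp only [map_add, LinearMap.add_apply, qadd_lie, qlie_add]
        refine Eq.trans (Eq.trans ?_ (congrArg₂ (· + ·) h1 h2)) ?_ <;> module
      | smul t z _ h =>
        simp only [map_smul, LinearMap.smul_apply, qsmul_lie, qlie_smul]
        refine Eq.trans (Eq.trans ?_ (congrArg (t • ·) h)) ?_ <;> module
    | zero => simp [qzero_lie, qlie_zero]
    | add y y' _ _ h1 h2 =>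
      simp only [map_add, LinearMap.add_apply, qadd_lie, qlie_add]
      refine Eq.trans (Eq.trans ?_ (congrArg₂ (· + ·) h1 h2)) ?_ <;> module
    | smul t y _ h =>
      simp only [map_smul, LinearMap.smul_apply, qsmul_lie, qlie_smul]
      refine Eq.trans (Eq.trans ?_ (congrArg (t • ·) h)) ?_ <;> module
  | zero => simp [qzero_lie, qlie_zero]
  | add x x' _ _ h1 h2 =>
    simp only [map_add, LinearMap.add_apply, qadd_lie, qlie_add]
    refine Eq.trans (Eq.trans ?_ (congrArg₂ (· + ·) h1 h2)) ?_ <;> module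
  | smul t x _ h =>
    simp only [map_smul, LinearMap.smul_apply, qsmul_lie, qlie_smul]
    refine Eq.trans (Eq.trans ?_ (congrArg (t • ·) h)) ?_ <;> module

/-- the left-symmetry axiom -/
lemma lsym_rule (x y z : QN k n) :
    mprod k n x (mprod k n y z) - mprod k n (mprod k n x y) z
    = mprod k n y (mprod k n x z) - mprod k n (mprod k n y x) z := by
  rw [m_m_right, m_m_right, m_m_left, m_m_left]
  have h := lsym_core k n x y z
  calc ⁅P1 k n x, T1 k n y z⁆ + rh k n (T1 k n y z) x - rh k n (T1 k n x y) z
      = ⁅P1 k n y, T1 k n x z⁆ + rh k n (T1 k n x z) y - rh k n (T1 k n y x) z := h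

end NovTest

/-- For every `n ≥ 1`, the free 3-step nilpotent Lie algebra on `n`
generators over a field `k` of characteristic zero (the quotient of the free Lie
algebra on `n` generators by the fourth term `γ₄` of its lower central series)
admits a Novikov structure. -/
theorem free_threeStep_nilpotent_hasNovikov
    (k : Type*) [Field k] [CharZero k] (n : ℕ) (hn : 1 ≤ n) :
    HasNovikovStructure k
      (FreeLieAlgebra k (Fin n) ⧸
        LieModule.lowerCentralSeries k (FreeLieAlgebra k (Fin n)) (FreeLieAlgebra k (Fin n)) 3) := by
  exact ⟨NovTest.mprod k n, fun x y z => NovTest.lsym_rule k n x y z,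
    fun x y z => NovTest.nov_rule k n x y z, fun x y => NovTest.comm_rule k n x y⟩
end

section
/- Let k be a field of characteristic zero and let t(n,k) denote the Lie algebra of upper triangular n×n matrices over k (with bracket the matrix commutator). Then t(n,k) admits a Novikov structure if and only if n ≤ 2. -/
attribute [local instance 100] LieRing.ofAssociativeRing

/-- The Lie algebra `t(n,k)` of upper triangular `n × n` matrices over `k`,
as a Lie subalgebra of the matrix Lie algebra (bracket `[M,N] = MN − NM`). -/
def upperTriangularLie (n : ℕ) (k : Type*) [Field k] :
    LieSubalgebra k (Matrix (Fin n) (Fin n) k) where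
  carrier := {M | ∀ i j : Fin n, j < i → M i j = 0}
  add_mem' := by
    intro M N hM hN i j hij
    simp [Matrix.add_apply, hM i j hij, hN i j hij]
  zero_mem' := by intro i j hij; simp
  smul_mem' := by
    intro c M hM i j hij
    simp [Matrix.smul_apply, hM i j hij]
  lie_mem' := by
    intro M N hM hN i j hij
    have key : ∀ P Q : Matrix (Fin n) (Fin n) k,
        (∀ i j : Fin n, j < i → P i j = 0) → (∀ i j : Fin n, j < i → Q i j = 0) →
        (P * Q) i j = 0 := by
      intro P Q hP hQ
      rw [Matrix.mul_apply]
      apply Finset.sum_eq_zero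
      intro l _
      rcases lt_or_ge l i with h | h
      · rw [hP i l h, zero_mul]
      · rw [hQ l j (lt_of_lt_of_le hij h), mul_zero]
    show (⁅M, N⁆ : Matrix (Fin n) (Fin n) k) i j = 0
    rw [Ring.lie_def]
    simp [Matrix.sub_apply, key M N hM hN, key N M hN hM]

section aux
variable {k : Type*} [Field k] {n : ℕ}

theorem key_identity_s17 {G : Type*} [LieRing G] [LieAlgebra k G] (mul : G →ₗ[k] G →ₗ[k] G)
    (hls : ∀ x y z : G,
      mul x (mul y z) - mul (mul x y) z = mul y (mul x z) - mul (mul y x) z)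
    (hnov : ∀ x y z : G, mul (mul x y) z = mul (mul x z) y)
    (hcomp : ∀ x y : G, mul x y - mul y x = ⁅x, y⁆) (x y z : G) :
    mul ⁅x, z⁆ y + mul ⁅x, z⁆ y = ⁅x, mul z y⁆ - ⁅z, mul x y⁆ := by
  have e1 : mul ⁅x, z⁆ y = mul (mul x z) y - mul (mul z x) y := by
    rw [← hcomp x z, map_sub, LinearMap.sub_apply]
  have ls' := hls z x y
  rw [← hnov z y x, ← hnov x y z] at ls'
  rw [e1, ← hnov x y z, ← hnov z y x, ← hcomp x (mul z y), ← hcomp z (mul x y)]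
  linear_combination (norm := abel) ls'

def tri (p q : Fin n) (hpq : p ≤ q) : upperTriangularLie n k :=
  ⟨Matrix.single p q 1, by
    intro i j hij
    have hne : ¬(p = i ∧ q = j) := by
      rintro ⟨rfl, rfl⟩
      exact absurd hpq (not_le.2 hij)
    simp [Matrix.single, hne]⟩

@[simp] lemma tri_coe (p q : Fin n) (hpq : p ≤ q) :
    ((tri p q hpq : upperTriangularLie n k) : Matrix (Fin n) (Fin n) k)
      = Matrix.single p q 1 := rfl

theorem noNovikov (i0 i1 i2 : Fin n) (h01 : i0 < i1) (h12 : i1 < i2) :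
    ¬ HasNovikovStructure k (upperTriangularLie n k) := by
  rintro ⟨mul, hls, hnov, hcomp⟩
  have h02 : i0 < i2 := h01.trans h12
  have n01 : i0 ≠ i1 := h01.ne
  have n10 : i1 ≠ i0 := h01.ne'
  have n12 : i1 ≠ i2 := h12.ne
  have n21 : i2 ≠ i1 := h12.ne'
  have n02 : i0 ≠ i2 := h02.ne
  have n20 : i2 ≠ i0 := h02.ne'
  set H1 : upperTriangularLie n k := tri i0 i0 le_rfl with hH1
  set H2 : upperTriangularLie n k := tri i1 i1 le_rfl with hH2
  set Ee : upperTriangularLie n k := tri i0 i1 h01.le with hEe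
  set Ff : upperTriangularLie n k := tri i1 i2 h12.le with hFf
  set Gg : upperTriangularLie n k := tri i0 i2 h02.le with hGg
  have key := key_identity_s17 mul hls hnov hcomp
  -- bracket values
  have bH1H2 : ⁅H1, H2⁆ = (0 : upperTriangularLie n k) := by
    apply Subtype.ext
    simp [LieSubalgebra.coe_bracket, Ring.lie_def, hH1, hH2, n01, n10, n12, n21, n02, n20]
  have bH1e : ⁅H1, Ee⁆ = Ee := by
    apply Subtype.ext
    simp [LieSubalgebra.coe_bracket, Ring.lie_def, hH1, hEe, n01, n10, n12, n21, n02, n20]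
  have beH2 : ⁅Ee, H2⁆ = Ee := by
    apply Subtype.ext
    simp [LieSubalgebra.coe_bracket, Ring.lie_def, hEe, hH2, n01, n10, n12, n21, n02, n20]
  have bef : ⁅Ee, Ff⁆ = Gg := by
    apply Subtype.ext
    simp [LieSubalgebra.coe_bracket, Ring.lie_def, hEe, hFf, hGg, n01, n10, n12, n21, n02, n20]
  have bH1f : ⁅H1, Ff⁆ = (0 : upperTriangularLie n k) := by
    apply Subtype.ext
    simp [LieSubalgebra.coe_bracket, Ring.lie_def, hH1, hFf, n01, n10, n12, n21, n02, n20]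
  -- entry extraction helper
  have ev : ∀ (a b : upperTriangularLie n k), a = b → ∀ i j : Fin n,
      (a : Matrix (Fin n) (Fin n) k) i j = (b : Matrix (Fin n) (Fin n) k) i j := by
    rintro a b rfl i j; rfl
  -- S1
  have t1 := key H1 Ff H2
  rw [bH1H2, map_zero] at t1
  have s1 := ev _ _ t1 i1 i2
  simp [LieSubalgebra.coe_bracket, Ring.lie_def, Matrix.sub_apply, Matrix.add_apply,
    hH1, hH2, hEe, hFf, hGg, n01, n10, n21, n20, n12, n02] at s1
  -- S2
  have t2 := key H1 Ff Ee
  rw [bH1e] at t2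
  have s2 := ev _ _ t2 i0 i2
  simp [LieSubalgebra.coe_bracket, Ring.lie_def, Matrix.sub_apply, Matrix.add_apply,
    hH1, hH2, hEe, hFf, hGg, n01, n10, n21, n20, n12, n02] at s2
  -- S3
  have t3 := key Ee Ff H2
  rw [beH2] at t3
  have s3 := ev _ _ t3 i0 i2
  simp [LieSubalgebra.coe_bracket, Ring.lie_def, Matrix.sub_apply, Matrix.add_apply,
    hH1, hH2, hEe, hFf, hGg, n01, n10, n21, n20, n12, n02] at s3
  -- S4
  have s4 := ev _ _ (hcomp Ff H2) i1 i2
  simp [LieSubalgebra.coe_bracket, Ring.lie_def, Matrix.sub_apply, Matrix.add_apply,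
    hH1, hH2, hEe, hFf, hGg, n01, n10, n21, n20, n12, n02] at s4
  -- S5
  have t5 := key H1 Gg H2
  rw [bH1H2, map_zero] at t5
  have s5 := ev _ _ t5 i0 i2
  simp [LieSubalgebra.coe_bracket, Ring.lie_def, Matrix.sub_apply, Matrix.add_apply,
    hH1, hH2, hEe, hFf, hGg, n01, n10, n21, n20, n12, n02] at s5
  -- S6
  have s6 := ev _ _ (hcomp H2 Gg) i0 i2
  simp [LieSubalgebra.coe_bracket, Ring.lie_def, Matrix.sub_apply, Matrix.add_apply,
    hH1, hH2, hEe, hFf, hGg, n01, n10, n21, n20, n12, n02] at s6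
  -- S7
  have t7 := key Ee H2 Ff
  rw [bef] at t7
  have s7 := ev _ _ t7 i0 i2
  simp [LieSubalgebra.coe_bracket, Ring.lie_def, Matrix.sub_apply, Matrix.add_apply,
    hH1, hH2, hEe, hFf, hGg, n01, n10, n21, n20, n12, n02] at s7
  -- S8
  have s8 := ev _ _ (hcomp H2 Ee) i0 i1
  simp [LieSubalgebra.coe_bracket, Ring.lie_def, Matrix.sub_apply, Matrix.add_apply,
    hH1, hH2, hEe, hFf, hGg, n01, n10, n21, n20, n12, n02] at s8
  -- S9
  have t9 := key H1 Ee H2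
  rw [bH1H2, map_zero] at t9
  have s9 := ev _ _ t9 i0 i1
  simp [LieSubalgebra.coe_bracket, Ring.lie_def, Matrix.sub_apply, Matrix.add_apply,
    hH1, hH2, hEe, hFf, hGg, n01, n10, n21, n20, n12, n02] at s9
  -- S10
  have t10 := key H1 Ee Ff
  rw [bH1f, map_zero] at t10
  have s10 := ev _ _ t10 i0 i2
  simp [LieSubalgebra.coe_bracket, Ring.lie_def, Matrix.sub_apply, Matrix.add_apply,
    hH1, hH2, hEe, hFf, hGg, n01, n10, n21, n20, n12, n02] at s10
  -- S11
  have s11 := ev _ _ (hcomp Ee Ff) i0 i2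
  simp [LieSubalgebra.coe_bracket, Ring.lie_def, Matrix.sub_apply, Matrix.add_apply,
    hH1, hH2, hEe, hFf, hGg, n01, n10, n21, n20, n12, n02] at s11
  have contra : (1 : k) = 0 := by
    linear_combination - s11 + s10 - s9 - s8 + s7 + 2 * s6 + 2 * s5 + s4 - s3
      + 3 * s2 - 3 * s1
  exact one_ne_zero contra
end aux

section bwd
variable {k : Type*} [Field k]

theorem hasNov_abelian {g : Type*} [LieRing g] [LieAlgebra k g]
    (h : ∀ x y : g, ⁅x, y⁆ = 0) : HasNovikovStructure k g := by
  refine ⟨0, by simp, by simp, ?_⟩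
  intro x y
  simp [h x y]

theorem hasNov_zero : HasNovikovStructure k (upperTriangularLie 0 k) := by
  apply hasNov_abelian
  intro x y
  apply Subtype.ext
  rw [LieSubalgebra.coe_bracket]
  ext i j
  exact i.elim0

theorem hasNov_one : HasNovikovStructure k (upperTriangularLie 1 k) := by
  apply hasNov_abelian
  intro x y
  apply Subtype.ext
  rw [LieSubalgebra.coe_bracket, Ring.lie_def]
  ext i j
  fin_cases i <;> fin_cases j <;>
    simp [Matrix.sub_apply, Matrix.mul_apply] <;> ring

def e01 : upperTriangularLie 2 k :=
  ⟨Matrix.single 0 1 1, by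
    intro i j hij
    have hne : ¬((0 : Fin 2) = i ∧ (1 : Fin 2) = j) := by
      rintro ⟨rfl, rfl⟩; exact absurd hij (by decide)
    simp [Matrix.single, hne]⟩

@[simp] lemma e01_coe :
    ((e01 : upperTriangularLie 2 k) : Matrix (Fin 2) (Fin 2) k)
      = Matrix.single 0 1 1 := rfl

@[simp] lemma sb01 : Matrix.single (0 : Fin 2) 1 (1 : k) 0 1 = 1 := by
  simp [Matrix.single]
@[simp] lemma sb00 : Matrix.single (0 : Fin 2) 1 (1 : k) 0 0 = 0 := by
  simp [Matrix.single]
@[simp] lemma sb11 : Matrix.single (0 : Fin 2) 1 (1 : k) 1 1 = 0 := by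
  simp [Matrix.single]
@[simp] lemma sb10 : Matrix.single (0 : Fin 2) 1 (1 : k) 1 0 = 0 := by
  simp [Matrix.single]

@[simp] lemma coe_smul' (c : k) (m : upperTriangularLie 2 k) :
    ((c • m : upperTriangularLie 2 k) : Matrix (Fin 2) (Fin 2) k)
      = c • (m : Matrix (Fin 2) (Fin 2) k) := rfl

@[simp] lemma coe_add' (m m' : upperTriangularLie 2 k) :
    ((m + m' : upperTriangularLie 2 k) : Matrix (Fin 2) (Fin 2) k)
      = (m : Matrix (Fin 2) (Fin 2) k) + m' := rfl

theorem hasNov_two : HasNovikovStructure k (upperTriangularLie 2 k) := by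
  have tri10 : ∀ x : upperTriangularLie 2 k,
      (x : Matrix (Fin 2) (Fin 2) k) 1 0 = 0 := fun x => x.2 1 0 (by decide)
  refine ⟨LinearMap.mk₂ k
    (fun x y => (((x : Matrix (Fin 2) (Fin 2) k) 0 0
        - (x : Matrix (Fin 2) (Fin 2) k) 1 1)
      * (y : Matrix (Fin 2) (Fin 2) k) 0 1) • e01)
    ?_ ?_ ?_ ?_, ?_, ?_, ?_⟩
  · intro m₁ m₂ y
    rw [← add_smul]
    congr 1
    simp only [AddMemClass.coe_add, Matrix.add_apply]
    ring
  · intro c m y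
    rw [smul_smul]
    congr 1
    simp only [coe_smul', Matrix.smul_apply, smul_eq_mul]
    ring
  · intro m y₁ y₂
    rw [← add_smul]
    congr 1
    simp only [AddMemClass.coe_add, Matrix.add_apply]
    ring
  · intro c m y
    rw [smul_smul]
    congr 1
    simp only [coe_smul', Matrix.smul_apply, smul_eq_mul]
    ring
  · intro x y z
    simp [LinearMap.mk₂_apply, coe_smul', Matrix.smul_apply, smul_eq_mul,
      e01_coe, Matrix.single]
    module
  · intro x y z
    simp [LinearMap.mk₂_apply, coe_smul', Matrix.smul_apply, smul_eq_mul,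
      e01_coe, Matrix.single]
  · intro x y
    apply Subtype.ext
    rw [LieSubalgebra.coe_bracket, Ring.lie_def]
    simp only [LinearMap.mk₂_apply, AddSubgroupClass.coe_sub, coe_smul', e01_coe]
    ext i j
    fin_cases i <;> fin_cases j <;>
      simp [Matrix.sub_apply, Matrix.smul_apply, Matrix.mul_apply, Fin.sum_univ_two,
        Matrix.single, smul_eq_mul, tri10] <;>
      ring
end bwd

/-- For a field `k` of characteristic zero, the Lie algebra `t(n,k)`
of upper triangular `n × n` matrices admits a Novikov structure if and only if
`n ≤ 2`. -/
theorem upperTriangularLie_hasNovikov_iff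
    (k : Type*) [Field k] [CharZero k] (n : ℕ) :
    HasNovikovStructure k (upperTriangularLie n k) ↔ n ≤ 2 := by
  constructor
  · intro h
    by_contra hn
    push_neg at hn
    exact noNovikov (k := k) ⟨0, by omega⟩ ⟨1, by omega⟩ ⟨2, by omega⟩
      (Fin.mk_lt_mk.mpr (by omega)) (Fin.mk_lt_mk.mpr (by omega)) h
  · intro hn
    interval_cases n
    · exact hasNov_zero
    · exact hasNov_one
    · exact hasNov_two
end
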